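/- Rank-sum strange point bound: Let N ≥ 3 and for each ordered triple of distinct units (i,j,k) in [N] let I{i ≻ j} ∈ {0,1} be indicators with the property that, within each unordered triple {i,j,k}, the sum of the six indicators I{i≻j} + I{i≻k} + I{j≻i} + I{j≻k} + I{k≻i} + I{k≻j} is at most 3, and for i,j ∈ S, k ∉ S the sum I{i≻j}+I{i≻k}+I{j≻i}+I{j≻k} is at most 3. Fix α ∈ (0,1) and call unit i strange if Σ_{j≠k, j,k ∈ [N]\{i}} (1/2)(I{i≻j} + I{i≻k}) ≥ (1 − α/2)(N−1)(N−2). Then the number s of strange units satisfies s ≤ ⌊(N−1)α⌋ + 1. -/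
import Mathlib


open Finset


lemma pair_swap {M ι : Type*} [AddCommMonoid M] [DecidableEq ι]
    (E : Finset ι) (F : ι → ι → M) :
    ∑ x ∈ E, ∑ y ∈ E.erase x, F x y = ∑ y ∈ E, ∑ x ∈ E.erase y, F x y := by
  rw [Finset.sum_comm']
  intro x y
  simp only [Finset.mem_erase]
  constructor
  · rintro ⟨hx, hyx, hy⟩; exact ⟨⟨hyx.symm, hx⟩, hy⟩
  · rintro ⟨⟨hxy, hx⟩, hy⟩; exact ⟨hx, hxy.symm, hy⟩

-- inner swap: ∑_{j∈E}∑_{k∈E.erase j} f k = (|E|-1) * ∑_{k∈E} f k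
lemma inner_swap {ι : Type*} [DecidableEq ι] (E : Finset ι) (f : ι → ℕ) :
    ∑ j ∈ E, ∑ k ∈ E.erase j, f k = (E.card - 1) * ∑ k ∈ E, f k := by
  rw [pair_swap E (fun _ k => f k), Finset.mul_sum]
  refine Finset.sum_congr rfl fun k hk => ?_
  rw [Finset.sum_const, Finset.card_erase_of_mem hk, smul_eq_mul]

lemma A_bound (N : ℕ) (b : Fin N → Fin N → ℕ) (S : Finset (Fin N))
    (htriple : ∀ i j k : Fin N, i ≠ j → j ≠ k → i ≠ k →
      b i j + b i k + b j i + b j k + b k i + b k j ≤ 3)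
    (hS3 : 3 ≤ S.card) :
    2 * (∑ i ∈ S, ∑ j ∈ S.erase i, b i j) ≤ S.card * (S.card - 1) := by
  set s := S.card with hs
  set A := ∑ i ∈ S, ∑ j ∈ S.erase i, b i j with hA
  -- the six reindexed triple sums
  have hcard2 : ∀ i ∈ S, ∀ j ∈ S.erase i, ((S.erase i).erase j).card = s - 2 := by
    intro i hi j hj
    rw [Finset.card_erase_of_mem hj, Finset.card_erase_of_mem hi]
    omega
  have N1 : ∑ i ∈ S, ∑ j ∈ S.erase i, ∑ _k ∈ (S.erase i).erase j, b i j = (s - 2) * A := by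
    rw [hA, Finset.mul_sum]
    refine Finset.sum_congr rfl fun i hi => ?_
    rw [Finset.mul_sum]
    refine Finset.sum_congr rfl fun j hj => ?_
    rw [Finset.sum_const, hcard2 i hi j hj, smul_eq_mul]
  have N2 : ∑ i ∈ S, ∑ j ∈ S.erase i, ∑ k ∈ (S.erase i).erase j, b i k = (s - 2) * A := by
    rw [hA, Finset.mul_sum]
    refine Finset.sum_congr rfl fun i hi => ?_
    rw [inner_swap (S.erase i) (fun k => b i k), Finset.card_erase_of_mem hi,
      show S.card - 1 - 1 = s - 2 by omega]
  have houter : ∀ F : Fin N → Fin N → ℕ,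
      ∑ i ∈ S, ∑ j ∈ S.erase i, F j i = ∑ i ∈ S, ∑ j ∈ S.erase i, F i j := by
    intro F
    rw [pair_swap S (fun i j => F j i)]
  have N3 : ∑ i ∈ S, ∑ j ∈ S.erase i, ∑ _k ∈ (S.erase i).erase j, b j i = (s - 2) * A := by
    have : ∑ i ∈ S, ∑ j ∈ S.erase i, ∑ _k ∈ (S.erase i).erase j, b j i
        = ∑ i ∈ S, ∑ j ∈ S.erase i, (s - 2) * b j i := by
      refine Finset.sum_congr rfl fun i hi => Finset.sum_congr rfl fun j hj => ?_
      rw [Finset.sum_const, hcard2 i hi j hj, smul_eq_mul]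
    rw [this, houter (fun i j => (s-2) * b i j), hA, Finset.mul_sum]
    refine Finset.sum_congr rfl fun i _ => ?_
    rw [Finset.mul_sum]
  have N4 : ∑ i ∈ S, ∑ j ∈ S.erase i, ∑ k ∈ (S.erase i).erase j, b j k = (s - 2) * A := by
    have step1 : ∑ i ∈ S, ∑ j ∈ S.erase i, ∑ k ∈ (S.erase i).erase j, b j k
        = ∑ j ∈ S, ∑ i ∈ S.erase j, ∑ k ∈ (S.erase i).erase j, b j k :=
      pair_swap S (fun i j => ∑ k ∈ (S.erase i).erase j, b j k)
    rw [step1]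
    have step2 : ∀ j ∈ S, ∑ i ∈ S.erase j, ∑ k ∈ (S.erase i).erase j, b j k
        = ∑ i ∈ S.erase j, ∑ k ∈ (S.erase j).erase i, b j k := by
      intro j hj
      refine Finset.sum_congr rfl fun i hi => ?_
      rw [Finset.erase_right_comm]
    rw [Finset.sum_congr rfl step2, hA, Finset.mul_sum]
    refine Finset.sum_congr rfl fun j hj => ?_
    rw [inner_swap (S.erase j) (fun k => b j k), Finset.card_erase_of_mem hj,
      show S.card - 1 - 1 = s - 2 by omega]
  have N5 : ∑ i ∈ S, ∑ j ∈ S.erase i, ∑ k ∈ (S.erase i).erase j, b k i = (s - 2) * A := by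
    have : ∀ i ∈ S, ∑ j ∈ S.erase i, ∑ k ∈ (S.erase i).erase j, b k i
        = (s - 2) * ∑ k ∈ S.erase i, b k i := by
      intro i hi
      rw [inner_swap (S.erase i) (fun k => b k i), Finset.card_erase_of_mem hi,
        show S.card - 1 - 1 = s - 2 by omega]
    rw [Finset.sum_congr rfl this, ← Finset.mul_sum, houter b, ← hA]
  have N6 : ∑ i ∈ S, ∑ j ∈ S.erase i, ∑ k ∈ (S.erase i).erase j, b k j = (s - 2) * A := by
    have inner : ∀ i ∈ S, ∑ j ∈ S.erase i, ∑ k ∈ (S.erase i).erase j, b k j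
        = ∑ k ∈ S.erase i, ∑ j ∈ (S.erase i).erase k, b k j :=
      fun i _ => pair_swap (S.erase i) (fun j k => b k j)
    rw [Finset.sum_congr rfl inner]
    -- this is now N4 with j,k renamed
    have step2 : ∑ i ∈ S, ∑ k ∈ S.erase i, ∑ j ∈ (S.erase i).erase k, b k j
        = ∑ k ∈ S, ∑ i ∈ S.erase k, ∑ j ∈ (S.erase k).erase i, b k j := by
      rw [pair_swap S (fun i k => ∑ j ∈ (S.erase i).erase k, b k j)]
      refine Finset.sum_congr rfl fun k hk => Finset.sum_congr rfl fun i hi => ?_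
      rw [Finset.erase_right_comm]
    rw [step2, hA, Finset.mul_sum]
    refine Finset.sum_congr rfl fun k hk => ?_
    rw [inner_swap (S.erase k) (fun j => b k j), Finset.card_erase_of_mem hk,
      show S.card - 1 - 1 = s - 2 by omega]
  -- total
  have hX : ∑ i ∈ S, ∑ j ∈ S.erase i, ∑ k ∈ (S.erase i).erase j,
      (b i j + b i k + b j i + b j k + b k i + b k j) = 6 * ((s - 2) * A) := by
    have expand : ∑ i ∈ S, ∑ j ∈ S.erase i, ∑ k ∈ (S.erase i).erase j,
        (b i j + b i k + b j i + b j k + b k i + b k j)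
      = (∑ i ∈ S, ∑ j ∈ S.erase i, ∑ k ∈ (S.erase i).erase j, b i j)
      + (∑ i ∈ S, ∑ j ∈ S.erase i, ∑ k ∈ (S.erase i).erase j, b i k)
      + (∑ i ∈ S, ∑ j ∈ S.erase i, ∑ k ∈ (S.erase i).erase j, b j i)
      + (∑ i ∈ S, ∑ j ∈ S.erase i, ∑ k ∈ (S.erase i).erase j, b j k)
      + (∑ i ∈ S, ∑ j ∈ S.erase i, ∑ k ∈ (S.erase i).erase j, b k i)
      + (∑ i ∈ S, ∑ j ∈ S.erase i, ∑ k ∈ (S.erase i).erase j, b k j) := by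
      simp [Finset.sum_add_distrib]
    rw [expand, N1, N2, N3, N4, N5, N6]
    ring
  have hXle : ∑ i ∈ S, ∑ j ∈ S.erase i, ∑ k ∈ (S.erase i).erase j,
      (b i j + b i k + b j i + b j k + b k i + b k j) ≤ s * ((s - 1) * ((s - 2) * 3)) := by
    calc ∑ i ∈ S, ∑ j ∈ S.erase i, ∑ k ∈ (S.erase i).erase j,
        (b i j + b i k + b j i + b j k + b k i + b k j)
        ≤ ∑ i ∈ S, ∑ j ∈ S.erase i, ∑ k ∈ (S.erase i).erase j, 3 := by
          refine Finset.sum_le_sum fun i hi => Finset.sum_le_sum fun j hj =>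
            Finset.sum_le_sum fun k hk => ?_
          have hij : i ≠ j := (Finset.ne_of_mem_erase hj).symm
          have hjk : j ≠ k := (Finset.ne_of_mem_erase hk).symm
          have hik : i ≠ k := (Finset.ne_of_mem_erase (Finset.mem_of_mem_erase hk)).symm
          exact htriple i j k hij hjk hik
      _ = s * ((s - 1) * ((s - 2) * 3)) := by
          have e1 : ∀ i ∈ S, ∀ j ∈ S.erase i,
              (∑ _k ∈ (S.erase i).erase j, 3) = (s - 2) * 3 := by
            intro i hi j hj
            rw [Finset.sum_const, hcard2 i hi j hj, smul_eq_mul]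
          have e2 : ∀ i ∈ S, (∑ j ∈ S.erase i, ∑ _k ∈ (S.erase i).erase j, (3:ℕ))
              = (s - 1) * ((s - 2) * 3) := by
            intro i hi
            rw [Finset.sum_congr rfl (e1 i hi), Finset.sum_const,
              Finset.card_erase_of_mem hi, smul_eq_mul]
          rw [Finset.sum_congr rfl e2, Finset.sum_const, smul_eq_mul, hs]
  have h := hX ▸ hXle
  obtain ⟨t, ht⟩ : ∃ t, s = t + 3 := ⟨s - 3, by omega⟩
  have h3 : 3 * ((t + 1) * (2 * A)) ≤ 3 * ((t + 1) * (s * (s - 1))) := by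
    calc 3 * ((t + 1) * (2 * A)) = 6 * ((s - 2) * A) := by rw [show s - 2 = t + 1 by omega]; ring
      _ ≤ s * ((s - 1) * ((s - 2) * 3)) := h
      _ = 3 * ((t + 1) * (s * (s - 1))) := by rw [show s - 2 = t + 1 by omega]; ring
  exact Nat.le_of_mul_le_mul_left (Nat.le_of_mul_le_mul_left h3 (by omega)) (by omega)

lemma strange_sum (N : ℕ) (hN : 3 ≤ N) (b : Fin N → Fin N → ℕ) (i : Fin N) :
    ∑ p ∈ Finset.univ.filter (fun p : Fin N × Fin N =>
        p.1 ≠ p.2 ∧ p.1 ≠ i ∧ p.2 ≠ i),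
        (1 / 2 : ℝ) * ((b i p.1 : ℝ) + (b i p.2 : ℝ))
      = ((N : ℝ) - 2) * ∑ j ∈ Finset.univ.erase i, (b i j : ℝ) := by
  set E : Finset (Fin N) := Finset.univ.erase i with hE
  set f : Fin N → ℝ := fun j => (b i j : ℝ) with hf
  have hP : Finset.univ.filter (fun p : Fin N × Fin N =>
      p.1 ≠ p.2 ∧ p.1 ≠ i ∧ p.2 ≠ i) = E.offDiag := by
    ext p
    simp only [Finset.mem_filter, Finset.mem_univ, true_and, Finset.mem_offDiag, hE,
      Finset.mem_erase]
    tauto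
  have hEcard : (E.card : ℝ) = (N : ℝ) - 1 := by
    rw [hE, Finset.card_erase_of_mem (Finset.mem_univ i), Finset.card_univ, Fintype.card_fin]
    have : (1:ℕ) ≤ N := by omega
    push_cast [Nat.cast_sub this]
    ring
  have hprod : ∑ p ∈ E ×ˢ E, (1 / 2 : ℝ) * (f p.1 + f p.2)
      = (E.card : ℝ) * ∑ j ∈ E, f j := by
    rw [Finset.sum_product]
    have hrow : ∀ x ∈ E, ∑ y ∈ E, (1 / 2 : ℝ) * (f x + f y)
        = (E.card : ℝ) * ((1/2) * f x) + (1/2) * ∑ y ∈ E, f y := by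
      intro x _
      rw [Finset.mul_sum]
      rw [Finset.sum_congr rfl (fun y _ => mul_add (1/2 : ℝ) (f x) (f y)),
        Finset.sum_add_distrib, Finset.sum_const, nsmul_eq_mul]
    rw [Finset.sum_congr rfl hrow, Finset.sum_add_distrib, Finset.sum_const, nsmul_eq_mul]
    simp only [← Finset.mul_sum]
    ring
  have hdiag : ∑ p ∈ E.diag, (1 / 2 : ℝ) * (f p.1 + f p.2) = ∑ j ∈ E, f j := by
    rw [Finset.sum_diag E (fun p => (1 / 2 : ℝ) * (f p.1 + f p.2))]
    refine Finset.sum_congr rfl fun x _ => ?_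
    simp; ring
  have hsplit : ∑ p ∈ E ×ˢ E, (1 / 2 : ℝ) * (f p.1 + f p.2)
      = (∑ p ∈ E.diag, (1 / 2 : ℝ) * (f p.1 + f p.2))
      + ∑ p ∈ E.offDiag, (1 / 2 : ℝ) * (f p.1 + f p.2) := by
    rw [← Finset.diag_union_offDiag E, Finset.sum_union (Finset.disjoint_diag_offDiag E)]
  rw [hP]
  have : ∑ p ∈ E.offDiag, (1 / 2 : ℝ) * (f p.1 + f p.2)
      = ((N:ℝ) - 2) * ∑ j ∈ E, f j := by
    have := hsplit
    rw [hprod, hdiag, hEcard] at this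
    linarith [this]
  exact this


/-- Rank-sum strange point bound: with pairwise comparison indicators `b i j ∈ {0,1}`
such that within each unordered triple the six indicators sum to at most 3 and, for
strange `i, j` and non-strange `k`, the four indicators `b i j + b i k + b j i + b j k`
sum to at most 3, the number `s` of strange units (units `i` with
`∑_{j≠k, j,k ≠ i} (1/2)(b i j + b i k) ≥ (1 - α/2)(N-1)(N-2)`) satisfies
`s ≤ ⌊(N-1)α⌋ + 1`. -/
theorem ranksum_strange_bound (N : ℕ) (hN : 3 ≤ N)
    (b : Fin N → Fin N → ℕ) (hb01 : ∀ i j : Fin N, b i j ≤ 1)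
    (α : ℝ) (hα0 : 0 < α) (hα1 : α < 1)
    (S : Finset (Fin N))
    (hS : S = Finset.univ.filter (fun i : Fin N =>
      (1 - α / 2) * ((N : ℝ) - 1) * ((N : ℝ) - 2) ≤
        ∑ p ∈ Finset.univ.filter (fun p : Fin N × Fin N =>
          p.1 ≠ p.2 ∧ p.1 ≠ i ∧ p.2 ≠ i),
          (1 / 2 : ℝ) * ((b i p.1 : ℝ) + (b i p.2 : ℝ))))
    (htriple : ∀ i j k : Fin N, i ≠ j → j ≠ k → i ≠ k →
      b i j + b i k + b j i + b j k + b k i + b k j ≤ 3)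
    (hfour : ∀ i j k : Fin N, i ≠ j → j ≠ k → i ≠ k → i ∈ S → j ∈ S → k ∉ S →
      b i j + b i k + b j i + b j k ≤ 3)
    (s : ℕ) (hs : s = S.card) :
    (s : ℤ) ≤ ⌊((N : ℝ) - 1) * α⌋ + 1 := by
  have hNR : (3:ℝ) ≤ (N:ℝ) := by exact_mod_cast hN
  -- d i = row sum of b i
  set d : Fin N → ℕ := fun i => ∑ j ∈ Finset.univ.erase i, b i j with hd
  have hstrange : ∀ i ∈ S, (1 - α / 2) * ((N : ℝ) - 1) ≤ (d i : ℝ) := by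
    intro i hi
    rw [hS, Finset.mem_filter] at hi
    have h2 := hi.2
    rw [strange_sum N hN b i] at h2
    have hcast : ∑ j ∈ Finset.univ.erase i, ((b i j : ℝ)) = (d i : ℝ) := by
      rw [hd]; push_cast; rfl
    rw [hcast] at h2
    have hN2 : (0:ℝ) < (N:ℝ) - 2 := by linarith
    have h3 : ((1 - α / 2) * ((N : ℝ) - 1)) * ((N:ℝ) - 2) ≤ (d i : ℝ) * ((N:ℝ) - 2) := by
      nlinarith [h2]
    exact le_of_mul_le_mul_right h3 hN2
  set A : ℕ := ∑ i ∈ S, ∑ j ∈ S.erase i, b i j with hA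
  set B : ℕ := ∑ i ∈ S, ∑ j ∈ Sᶜ, b i j with hB
  have hsplit : ∀ i ∈ S, d i = (∑ j ∈ S.erase i, b i j) + ∑ j ∈ Sᶜ, b i j := by
    intro i hi
    have hdisj : Disjoint (S.erase i) Sᶜ :=
      disjoint_compl_right.mono_left (Finset.erase_subset i S)
    have hunion : S.erase i ∪ Sᶜ = Finset.univ.erase i := by
      ext j
      simp only [Finset.mem_union, Finset.mem_erase, Finset.mem_compl, Finset.mem_univ, and_true]
      constructor
      · rintro (⟨hji, _⟩ | hjS)
        · exact hji
        · rintro rfl; exact hjS hi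
      · intro hji
        by_cases hjS : j ∈ S
        · exact Or.inl ⟨hji, hjS⟩
        · exact Or.inr hjS
    rw [hd]
    simp only
    rw [← hunion, Finset.sum_union hdisj]
  have hT : ∑ i ∈ S, d i = A + B := by
    rw [Finset.sum_congr rfl hsplit, Finset.sum_add_distrib]
  have hTreal : (S.card : ℝ) * ((1 - α / 2) * ((N : ℝ) - 1)) ≤ (A : ℝ) + (B : ℝ) := by
    calc (S.card : ℝ) * ((1 - α / 2) * ((N : ℝ) - 1))
        = ∑ _i ∈ S, ((1 - α / 2) * ((N : ℝ) - 1)) := by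
          rw [Finset.sum_const, nsmul_eq_mul]
      _ ≤ ∑ i ∈ S, (d i : ℝ) := Finset.sum_le_sum hstrange
      _ = (A : ℝ) + (B : ℝ) := by
          rw [← Nat.cast_sum, hT]; push_cast; ring
  have hScard_le : S.card ≤ N := by
    have := Finset.card_le_univ S
    simpa [Finset.card_univ] using this
  have hBle : B ≤ S.card * (N - S.card) := by
    calc B ≤ ∑ _i ∈ S, ∑ _j ∈ Sᶜ, 1 :=
        Finset.sum_le_sum fun i _ => Finset.sum_le_sum fun j _ => hb01 i j
      _ = S.card * (N - S.card) := by
        simp [Finset.sum_const, Finset.card_compl, Finset.card_univ, mul_comm]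
  -- case split on s
  rcases lt_or_ge s 2 with hcase | hcase
  · -- s ≤ 1
    have hfl : 0 ≤ ⌊((N : ℝ) - 1) * α⌋ := by
      apply Int.floor_nonneg.mpr
      nlinarith
    omega
  rcases eq_or_lt_of_le hcase with hcase2 | hcase3
  · -- s = 2
    have hs2 : S.card = 2 := by omega
    obtain ⟨i, j, hij, hSij⟩ := Finset.card_eq_two.mp hs2
    have hiS : i ∈ S := by rw [hSij]; simp
    have hjS : j ∈ S := by rw [hSij]; simp
    have key : (1:ℝ) ≤ ((N:ℝ) - 1) * α := by
      have hAval : A = b i j + b j i := by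
        rw [hA, hSij]
        rw [Finset.sum_pair hij]
        have e1 : ({i, j} : Finset (Fin N)).erase i = {j} := by
          rw [Finset.erase_insert (by simpa using hij)]
        have e2 : ({i, j} : Finset (Fin N)).erase j = {i} := by
          rw [Finset.pair_comm, Finset.erase_insert (by simpa using hij.symm)]
        rw [e1, e2, Finset.sum_singleton, Finset.sum_singleton]
      have hcompl_card : (Sᶜ : Finset (Fin N)).card = N - 2 := by
        rw [Finset.card_compl, Fintype.card_fin, hs2]
      rcases le_or_gt (b i j + b j i) 1 with hsub | hsub
      · -- A ≤ 1, B ≤ 2*(N-2)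
        have hBle2 : B ≤ 2 * (N - 2) := by
          have := hBle; rw [hs2] at this; omega
        have hABle : (A:ℝ) + (B:ℝ) ≤ 1 + 2 * ((N:ℝ) - 2) := by
          have hA1 : A ≤ 1 := by omega
          have hc : ((N - 2 : ℕ) : ℝ) = (N:ℝ) - 2 := by
            push_cast [Nat.cast_sub (by omega : 2 ≤ N)]; ring
          have hcB : (B : ℝ) ≤ 2 * ((N:ℝ) - 2) := by
            calc (B:ℝ) ≤ ((2 * (N-2) : ℕ) : ℝ) := by exact_mod_cast hBle2
              _ = 2 * ((N:ℝ) - 2) := by push_cast [Nat.cast_sub (by omega : 2 ≤ N)]; ring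
          have : (A:ℝ) ≤ 1 := by exact_mod_cast hA1
          linarith
        rw [hs2] at hTreal
        nlinarith
      · -- b i j + b j i = 2, then B ≤ N - 2
        have hb2 : b i j = 1 ∧ b j i = 1 := by
          have h1 := hb01 i j; have h2 := hb01 j i; omega
        have hBle2 : B ≤ N - 2 := by
          have hBsum : B = ∑ k ∈ Sᶜ, (b i k + b j k) := by
            rw [hB, hSij, Finset.sum_pair hij, Finset.sum_add_distrib]
          rw [hBsum]
          have step1 : ∑ k ∈ Sᶜ, (b i k + b j k) ≤ ∑ _k ∈ Sᶜ, 1 := by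
            refine Finset.sum_le_sum fun k hk => ?_
            have hki : k ≠ i := by
              intro h; rw [Finset.mem_compl] at hk; exact hk (h ▸ hiS)
            have hkj : k ≠ j := by
              intro h; rw [Finset.mem_compl] at hk; exact hk (h ▸ hjS)
            have := htriple i j k hij hkj.symm hki.symm
            omega
          have step2 : ∑ _k ∈ Sᶜ, (1:ℕ) = N - 2 := by
            rw [Finset.sum_const, smul_eq_mul, mul_one, hcompl_card]
          omega
        have hAB : (A:ℝ) + (B:ℝ) ≤ (N:ℝ) := by
          have hA2 : A = 2 := by omega
          have : (B : ℝ) ≤ (N:ℝ) - 2 := by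
            calc (B:ℝ) ≤ ((N - 2 : ℕ):ℝ) := by exact_mod_cast hBle2
              _ = (N:ℝ) - 2 := by push_cast [Nat.cast_sub (by omega : 2 ≤ N)]; ring
          rw [hA2]; push_cast; linarith
        rw [hs2] at hTreal
        nlinarith
    have : (1:ℤ) ≤ ⌊((N : ℝ) - 1) * α⌋ := Int.le_floor.mpr (by exact_mod_cast key)
    omega
  · -- s ≥ 3
    have hS3 : 3 ≤ S.card := by omega
    have hA2 := A_bound N b S htriple hS3
    have key : (s:ℝ) - 1 ≤ ((N : ℝ) - 1) * α := by
      have hcA : 2 * (A:ℝ) ≤ (s:ℝ) * ((s:ℝ) - 1) := by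
        calc 2 * (A:ℝ) = ((2 * A : ℕ) : ℝ) := by push_cast; ring
          _ ≤ ((S.card * (S.card - 1) : ℕ) : ℝ) := by exact_mod_cast hA2
          _ = (s:ℝ) * ((s:ℝ) - 1) := by
            rw [← hs, Nat.cast_mul, Nat.cast_sub (by omega : 1 ≤ s)]; push_cast; ring
      have hcB : (B:ℝ) ≤ (s:ℝ) * ((N:ℝ) - (s:ℝ)) := by
        calc (B:ℝ) ≤ ((S.card * (N - S.card) : ℕ) : ℝ) := by exact_mod_cast hBle
          _ = (s:ℝ) * ((N:ℝ) - (s:ℝ)) := by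
            rw [← hs, Nat.cast_mul, Nat.cast_sub (hs ▸ hScard_le)]
      have hTr : (s : ℝ) * ((1 - α / 2) * ((N : ℝ) - 1)) ≤ (A : ℝ) + (B : ℝ) := by
        rw [hs]; push_cast; exact hTreal
      have hspos : (0:ℝ) < (s:ℝ) := by
        have : 0 < s := by omega
        exact_mod_cast this
      -- 2*s*(1-α/2)(N-1) ≤ 2A+2B ≤ s(s-1)+2s(N-s) ⇒ s-1 ≤ (N-1)α
      nlinarith [hTr, hcA, hcB, hspos, mul_pos hspos hspos]
    have : (s:ℤ) - 1 ≤ ⌊((N : ℝ) - 1) * α⌋ := by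
      apply Int.le_floor.mpr
      push_cast
      linarith
    omega
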